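/- Let n ≥ 1, let Ω = diag(ω₁, …, ωₙ) be a real diagonal matrix with ωᵢ > 0 for all i, and let 0 < p < 1. For every symmetric positive semidefinite D̃ ∈ ℝ^{n×n} such that Ã(D̃) is stable, the unique solution X of the Lyapunov equation Ã(D̃)X + XÃ(D̃)ᵀ = −diag(p·Iₙ, Iₙ) satisfies Tr(X) ≥ √(2p(1+p))·∑_{i=1}^n ωᵢ^{-1}; moreover the matrix D̃* = √(2(1+p)/p)·Ω is symmetric positive semidefinite with Ã(D̃*) stable, the corresponding solution X* satisfies Tr(X*) = √(2p(1+p))·∑_{i=1}^n ωᵢ^{-1}, and if any feasible D̃ attains this value then D̃ = D̃*. In other words, the optimization problem 'minimize √Tr(X) subject to Ã(D̃)X + XÃ(D̃)ᵀ = −diag(pI, I) over symmetric positive semidefinite D̃ with Ã(D̃) stable' has a unique global minimizer, attained at D̃ = √(2(1+p)/p)·Ω. -/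

import Mathlib

open Matrix

/-- A real square matrix is stable if every eigenvalue (as a complex matrix)
has negative real part. -/
def Matrix.IsStable {n : Type*} [Fintype n] [DecidableEq n] (A : Matrix n n ℝ) : Prop :=
  ∀ z ∈ spectrum ℂ (A.map (Complex.ofReal · )), z.re < 0

/-- The block matrix Ã(D̃) = [[0, Ω], [−Ω, −D̃]]. -/
def Atilde {n : ℕ} (ω : Fin n → ℝ) (D : Matrix (Fin n) (Fin n) ℝ) :
    Matrix (Fin n ⊕ Fin n) (Fin n ⊕ Fin n) ℝ :=
  Matrix.fromBlocks 0 (Matrix.diagonal ω) (-(Matrix.diagonal ω)) (-D)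


namespace MH2aux

variable {m : Type*} [Fintype m] [DecidableEq m]

lemma trace_tmul_rw (M : Matrix m m ℝ) : (Mᵀ * M).trace = ∑ j, ∑ i, (M i j)^2 := by
  simp [Matrix.trace, Matrix.diag, Matrix.mul_apply, sq, Matrix.transpose_apply]

lemma trace_tmul_self_nonneg (M : Matrix m m ℝ) : 0 ≤ (Mᵀ * M).trace := by
  rw [trace_tmul_rw]; positivity

lemma eq_zero_of_trace_tmul_self {M : Matrix m m ℝ} (h : (Mᵀ * M).trace = 0) : M = 0 := by
  rw [trace_tmul_rw] at h
  have h1 : ∀ j ∈ (Finset.univ : Finset m), (∑ i, (M i j)^2) = 0 :=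
    (Finset.sum_eq_zero_iff_of_nonneg (by intro j _; positivity)).mp h
  ext i j
  have h2 := (Finset.sum_eq_zero_iff_of_nonneg (by intro i _; positivity)).mp
    (h1 j (Finset.mem_univ j)) i (Finset.mem_univ i)
  exact pow_eq_zero_iff (n := 2) (by norm_num) |>.mp h2

lemma trace_skew_symm {K N : Matrix m m ℝ} (hK : Kᵀ = -K) (hN : Nᵀ = N) :
    (K * N).trace = 0 := by
  have h1 : ((K * N)ᵀ).trace = (K * N).trace := trace_transpose _
  rw [transpose_mul, hK, hN, mul_neg, trace_neg, trace_mul_comm] at h1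
  linarith

lemma trace_fromBlocks' (A : Matrix m m ℝ) (B C : Matrix m m ℝ) (E : Matrix m m ℝ) :
    (fromBlocks A B C E).trace = A.trace + E.trace := by
  simp [Matrix.trace, Fintype.sum_sum_type, Matrix.diag, Matrix.fromBlocks]

lemma skew_diag {K : Matrix m m ℝ} (hK : Kᵀ = -K) (i : m) : K i i = 0 := by
  have := congrFun (congrFun hK i) i
  simp only [Matrix.transpose_apply, Matrix.neg_apply] at this
  linarith

end MH2aux

section Spectral

open Complex

/-- From a real Ω-eigenvector in the kernel of D we get a purely imaginary
eigenvalue of Atilde, contradicting stability. -/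
lemma no_modal_kernel {n : ℕ} (ω : Fin n → ℝ) (hω : ∀ i, 0 < ω i)
    (D : Matrix (Fin n) (Fin n) ℝ) (hst : (Atilde ω D).IsStable) (j : Fin n)
    (v : Fin n → ℝ) (hv : v ≠ 0) (hcom : ∀ i, ω i * v i = ω j * v i)
    (hDv : D *ᵥ v = 0) : False := by
  classical
  set M : Matrix (Fin n ⊕ Fin n) (Fin n ⊕ Fin n) ℂ :=
    (Atilde ω D).map (Complex.ofReal ·) with hM
  have hMblocks : M = fromBlocks 0 (Matrix.diagonal (fun i => (ω i : ℂ)))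
      (-(Matrix.diagonal (fun i => (ω i : ℂ)))) (-(D.map (Complex.ofReal ·))) := by
    rw [hM]
    show (fromBlocks 0 (Matrix.diagonal ω) (-(Matrix.diagonal ω)) (-D)).map _ = _
    have hnegdiag : ((-(Matrix.diagonal ω)).map (Complex.ofReal ·))
        = -((Matrix.diagonal ω).map (Complex.ofReal ·)) := by
      ext i k
      by_cases h : i = k <;> simp [Matrix.diagonal_apply, h]
    have hnegD : ((-D).map (Complex.ofReal ·)) = -(D.map (Complex.ofReal ·)) := by
      ext i k; simp
    rw [fromBlocks_map, hnegdiag, hnegD, Matrix.map_zero _ Complex.ofReal_zero,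
      Matrix.diagonal_map Complex.ofReal_zero]
  set z : ℂ := Complex.I * (ω j : ℂ) with hz
  set xc : Fin n → ℂ := fun i => (v i : ℂ) with hxc
  set yc : Fin n → ℂ := fun i => Complex.I * (v i : ℂ) with hyc
  set u : (Fin n ⊕ Fin n) → ℂ := Sum.elim xc yc with hu
  have hu0 : u ≠ 0 := by
    obtain ⟨i, hi⟩ := Function.ne_iff.mp hv
    intro h
    apply hi
    have h2 := congrFun h (Sum.inl i)
    simp only [hu, Sum.elim_inl, hxc, Pi.zero_apply, Complex.ofReal_eq_zero] at h2
    exact h2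
  have hDvC : (D.map (Complex.ofReal ·)) *ᵥ xc = 0 := by
    funext i
    have h2 := congrFun hDv i
    simp only [Matrix.mulVec, dotProduct, Pi.zero_apply] at h2 ⊢
    simp only [hxc, Matrix.map_apply]
    push_cast
    exact_mod_cast congrArg (Complex.ofReal ·) h2
  have hDyc : (D.map (Complex.ofReal ·)) *ᵥ yc = 0 := by
    have h3 : yc = Complex.I • xc := by funext k; simp [hyc, hxc]
    rw [h3, Matrix.mulVec_smul, hDvC, smul_zero]
  have hMu : M *ᵥ u = z • u := by
    rw [hMblocks, hu, Matrix.fromBlocks_mulVec]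
    have hxl : (Sum.elim xc yc) ∘ Sum.inl = xc := rfl
    have hyr : (Sum.elim xc yc) ∘ Sum.inr = yc := rfl
    rw [hxl, hyr]
    funext s
    cases s with
    | inl i =>
      simp only [Sum.elim_inl, Pi.add_apply, Matrix.zero_mulVec, Pi.zero_apply, zero_add,
        Matrix.mulVec_diagonal, Pi.smul_apply, smul_eq_mul, hz, hxc, hyc]
      have h2 : ((ω i : ℂ)) * (v i : ℂ) = ((ω j : ℂ)) * (v i : ℂ) := by
        exact_mod_cast congrArg (Complex.ofReal ·) (hcom i)
      linear_combination Complex.I * h2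
    | inr i =>
      have hDyc' : (D.map (Complex.ofReal ·)) *ᵥ (fun i => Complex.I * (v i : ℂ)) = 0 := hDyc
      simp only [Sum.elim_inr, Pi.add_apply, Matrix.neg_mulVec, hDyc, hDyc', neg_zero, Pi.neg_apply,
        Pi.zero_apply, add_zero, Matrix.mulVec_diagonal, Pi.smul_apply, smul_eq_mul,
        hz, hxc, hyc]
      have h2 : ((ω i : ℂ)) * (v i : ℂ) = ((ω j : ℂ)) * (v i : ℂ) := by
        exact_mod_cast congrArg (Complex.ofReal ·) (hcom i)
      linear_combination (-1 : ℂ) * h2 + (-((ω j : ℂ) * (v i : ℂ))) * Complex.I_sq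
  have hdet : ((algebraMap ℂ (Matrix (Fin n ⊕ Fin n) (Fin n ⊕ Fin n) ℂ) z) - M).det = 0 := by
    apply Matrix.exists_mulVec_eq_zero_iff.mp
    refine ⟨u, hu0, ?_⟩
    rw [Matrix.sub_mulVec, Algebra.algebraMap_eq_smul_one, Matrix.smul_mulVec,
      Matrix.one_mulVec, hMu, sub_self]
  have hmem : z ∈ spectrum ℂ M := by
    rw [spectrum.mem_iff]
    intro hUnit
    rw [Matrix.isUnit_iff_isUnit_det, hdet] at hUnit
    exact (isUnit_iff_ne_zero.mp hUnit) rfl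
  have hlt := hst z hmem
  rw [hz] at hlt
  simp [Complex.mul_re] at hlt

/-- Stability of Atilde for D = c • diagonal ω with c > 0. -/
lemma quad_root_re_neg (cw w : ℝ) (hcw : 0 < cw) (hw : 0 < w) (z : ℂ)
    (h : z^2 + (cw : ℂ) * z + ((w : ℂ))^2 = 0) : z.re < 0 := by
  have hre := congrArg Complex.re h
  have him := congrArg Complex.im h
  simp only [Complex.add_re, Complex.add_im, Complex.mul_re, Complex.mul_im,
    Complex.ofReal_re, Complex.ofReal_im, Complex.zero_re, Complex.zero_im, pow_two] at hre him
  set a := z.re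
  set b := z.im
  -- hre : a*a - b*b + (cw*a - 0*b) + (w*w - 0*0) = 0
  -- him : (a*b + b*a) + (cw*b + 0*a) + (w*0 + 0*w) = 0
  have him' : b * (2*a + cw) = 0 := by linarith [him]
  rcases mul_eq_zero.mp him' with hb | hab
  · -- b = 0
    rw [hb] at hre
    by_contra hcon
    push_neg at hcon
    nlinarith
  · -- 2a + cw = 0
    have : a = -cw/2 := by linarith
    rw [this]
    linarith
  
lemma stable_modal {n : ℕ} (ω : Fin n → ℝ) (hω : ∀ i, 0 < ω i) (c : ℝ) (hc : 0 < c) :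
    (Atilde ω (c • Matrix.diagonal ω)).IsStable := by
  classical
  intro z hz
  set M : Matrix (Fin n ⊕ Fin n) (Fin n ⊕ Fin n) ℂ :=
    ((Atilde ω (c • Matrix.diagonal ω)).map (Complex.ofReal ·)) with hM
  have hMblocks : M = fromBlocks 0 (Matrix.diagonal (fun i => (ω i : ℂ)))
      (-(Matrix.diagonal (fun i => (ω i : ℂ)))) (-(Matrix.diagonal (fun i => ((c * ω i : ℝ) : ℂ)))) := by
    rw [hM]
    have hsm : c • Matrix.diagonal ω = Matrix.diagonal (fun i => c * ω i) := by
      rw [← Matrix.diagonal_smul]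
      rfl
    rw [hsm]
    show (fromBlocks 0 (Matrix.diagonal ω) (-(Matrix.diagonal ω))
      (-(Matrix.diagonal (fun i => c * ω i)))).map _ = _
    have hneg : ∀ (d : Fin n → ℝ), ((-(Matrix.diagonal d)).map (Complex.ofReal ·))
        = -((Matrix.diagonal d).map (Complex.ofReal ·)) := by
      intro d; ext i k
      by_cases h : i = k <;> simp [Matrix.diagonal_apply, h]
    rw [fromBlocks_map, hneg, hneg, Matrix.map_zero _ Complex.ofReal_zero,
      Matrix.diagonal_map Complex.ofReal_zero, Matrix.diagonal_map Complex.ofReal_zero]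
  have hdet : ((algebraMap ℂ (Matrix (Fin n ⊕ Fin n) (Fin n ⊕ Fin n) ℂ) z) - M).det = 0 := by
    by_contra hne
    exact (spectrum.mem_iff.mp hz)
      ((Matrix.isUnit_iff_isUnit_det _).mpr (isUnit_iff_ne_zero.mpr hne))
  obtain ⟨u, hu0, hu⟩ := Matrix.exists_mulVec_eq_zero_iff.mpr hdet
  have hMu : M *ᵥ u = z • u := by
    rw [Matrix.sub_mulVec, Algebra.algebraMap_eq_smul_one, Matrix.smul_mulVec,
      Matrix.one_mulVec] at hu
    exact (sub_eq_zero.mp hu).symm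
  set xc : Fin n → ℂ := fun i => u (Sum.inl i) with hxc
  set yc : Fin n → ℂ := fun i => u (Sum.inr i) with hyc
  have hud : u = Sum.elim xc yc := by funext s; cases s <;> rfl
  have happ : ∀ s, (M *ᵥ u) s = z * u s := by
    intro s; rw [hMu]; rfl
  have h1 : ∀ i, (ω i : ℂ) * yc i = z * xc i := by
    intro i
    have h2 := happ (Sum.inl i)
    rw [hMblocks] at h2
    rw [hud, Matrix.fromBlocks_mulVec] at h2
    rw [show (Sum.elim xc yc) ∘ Sum.inl = xc from rfl,
      show (Sum.elim xc yc) ∘ Sum.inr = yc from rfl] at h2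
    simpa [Matrix.zero_mulVec, Matrix.mulVec_diagonal] using h2
  have h2 : ∀ i, -((ω i : ℂ)) * xc i - ((c * ω i : ℝ) : ℂ) * yc i = z * yc i := by
    intro i
    have h3 := happ (Sum.inr i)
    rw [hMblocks] at h3
    rw [hud, Matrix.fromBlocks_mulVec] at h3
    rw [show (Sum.elim xc yc) ∘ Sum.inl = xc from rfl,
      show (Sum.elim xc yc) ∘ Sum.inr = yc from rfl] at h3
    simp only [Sum.elim_inl, Sum.elim_inr, Pi.add_apply, Matrix.neg_mulVec, Pi.neg_apply,
      Matrix.mulVec_diagonal] at h3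
    linear_combination h3
  have hy : ∃ i, yc i ≠ 0 := by
    by_contra hcon
    push_neg at hcon
    apply hu0
    funext s
    cases s with
    | inl i =>
      have e2 := h2 i
      rw [hcon i] at e2
      simp only [mul_zero, sub_zero] at e2
      have hωne : ((ω i : ℂ)) ≠ 0 := by
        simp only [ne_eq, Complex.ofReal_eq_zero]
        exact ne_of_gt (hω i)
      have e3 : ((ω i : ℂ)) * xc i = 0 := by linear_combination (-1 : ℂ) * e2
      exact (mul_eq_zero.mp e3).resolve_left hωne
    | inr i => exact hcon i
  obtain ⟨i, hyi⟩ := hy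
  have hquad : (z^2 + ((c * ω i : ℝ) : ℂ) * z + ((ω i : ℂ))^2) * yc i = 0 := by
    have e1 := h1 i
    have e2 := h2 i
    linear_combination (-z) * e2 + ((ω i : ℂ)) * e1
  have hq2 : z^2 + ((c * ω i : ℝ) : ℂ) * z + ((ω i : ℂ))^2 = 0 := by
    rcases mul_eq_zero.mp hquad with h | h
    · exact h
    · exact absurd h hyi
  exact quad_root_re_neg (c * ω i) (ω i) (mul_pos hc (hω i)) (hω i) z hq2

end Spectral

section Core

variable {n : ℕ}

/-- The core block-algebra lemma: from any solution of the Lyapunov equation we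
extract the symmetrized blocks and the key trace identities. -/
lemma core (ω : Fin n → ℝ) (hω : ∀ i, 0 < ω i) (p : ℝ)
    (D : Matrix (Fin n) (Fin n) ℝ) (hDsym : Dᵀ = D)
    (X : Matrix (Fin n ⊕ Fin n) (Fin n ⊕ Fin n) ℝ)
    (hX : Atilde ω D * X + X * (Atilde ω D)ᵀ =
      -(Matrix.fromBlocks (p • (1 : Matrix (Fin n) (Fin n) ℝ)) 0 0 1)) :
    ∃ E K : Matrix (Fin n) (Fin n) ℝ,
      Eᵀ = E ∧ Kᵀ = -K ∧
      X.trace = 2*E.trace +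
        p/2*((Matrix.diagonal fun i => (ω i)⁻¹) * D * (Matrix.diagonal fun i => (ω i)⁻¹)).trace ∧
      ((Matrix.diagonal fun i => (ω i)⁻¹) * D * E).trace = (1+p)/2 * (∑ i, (ω i)⁻¹) ∧
      (E*D*E).trace = (1+p)/2*E.trace -
        (Kᵀ*K*((Matrix.diagonal fun i => (ω i)⁻¹) * D * (Matrix.diagonal fun i => (ω i)⁻¹))).trace ∧
      D*E + E*D = (1+p)•(1 : Matrix (Fin n) (Fin n) ℝ)
        - (Matrix.diagonal ω)*K*(Matrix.diagonal fun i => (ω i)⁻¹)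
        + (Matrix.diagonal fun i => (ω i)⁻¹)*K*(Matrix.diagonal ω) ∧
      (Matrix.diagonal ω)*E*(Matrix.diagonal fun i => (ω i)⁻¹)
        - (Matrix.diagonal fun i => (ω i)⁻¹)*E*(Matrix.diagonal ω)
        = K*((Matrix.diagonal fun i => (ω i)⁻¹)*D*(Matrix.diagonal fun i => (ω i)⁻¹))
          + ((Matrix.diagonal fun i => (ω i)⁻¹)*D*(Matrix.diagonal fun i => (ω i)⁻¹))*K := by
  classical
  have hωne : ∀ i, ω i ≠ 0 := fun i => ne_of_gt (hω i)
  set Ω : Matrix (Fin n) (Fin n) ℝ := Matrix.diagonal ω with hΩdef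
  set Oi : Matrix (Fin n) (Fin n) ℝ := Matrix.diagonal (fun i => (ω i)⁻¹) with hOidef
  have hOOi : Ω * Oi = 1 := by
    rw [hΩdef, hOidef, diagonal_mul_diagonal]
    have h : (fun i => ω i * (ω i)⁻¹) = fun _ => (1:ℝ) :=
      funext fun i => mul_inv_cancel₀ (hωne i)
    rw [h, Matrix.diagonal_one]
  have hOiO : Oi * Ω = 1 := by
    rw [hΩdef, hOidef, diagonal_mul_diagonal]
    have h : (fun i => (ω i)⁻¹ * ω i) = fun _ => (1:ℝ) :=
      funext fun i => inv_mul_cancel₀ (hωne i)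
    rw [h, Matrix.diagonal_one]
  have hΩT : Ωᵀ = Ω := Matrix.diagonal_transpose ω
  have hOiT : Oiᵀ = Oi := Matrix.diagonal_transpose _
  set W : Matrix (Fin n ⊕ Fin n) (Fin n ⊕ Fin n) ℝ :=
    Matrix.fromBlocks (p • (1 : Matrix (Fin n) (Fin n) ℝ)) 0 0 1 with hWdef
  have hWT : Wᵀ = W := by
    rw [hWdef, fromBlocks_transpose]
    simp
  have hXT : Atilde ω D * Xᵀ + Xᵀ * (Atilde ω D)ᵀ = -W := by
    have h := congrArg Matrix.transpose hX
    rw [transpose_add, transpose_mul, transpose_mul, transpose_transpose, transpose_neg, hWT] at h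
    rw [add_comm] at h
    exact h
  set S : Matrix (Fin n ⊕ Fin n) (Fin n ⊕ Fin n) ℝ := (2⁻¹ : ℝ) • (X + Xᵀ) with hSdef
  have hS : Atilde ω D * S + S * (Atilde ω D)ᵀ = -W := by
    rw [hSdef, mul_smul_comm, smul_mul_assoc, ← smul_add, Matrix.mul_add, Matrix.add_mul]
    have h : Atilde ω D * X + Atilde ω D * Xᵀ + (X * (Atilde ω D)ᵀ + Xᵀ * (Atilde ω D)ᵀ)
        = (Atilde ω D * X + X * (Atilde ω D)ᵀ) + (Atilde ω D * Xᵀ + Xᵀ * (Atilde ω D)ᵀ) := by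
      abel
    rw [h, hX, hXT]
    have h2 : (-W) + (-W) = (2:ℝ) • (-W) := by
      rw [two_smul]
    rw [h2, smul_smul]
    norm_num
  have hST : Sᵀ = S := by
    rw [hSdef, transpose_smul, transpose_add, transpose_transpose, add_comm]
  set A : Matrix (Fin n) (Fin n) ℝ := S.toBlocks₁₁ with hAdef
  set B : Matrix (Fin n) (Fin n) ℝ := S.toBlocks₁₂ with hBdef
  set E : Matrix (Fin n) (Fin n) ℝ := S.toBlocks₂₂ with hEdef
  have hSapp : ∀ a b, Sᵀ a b = S a b := fun a b => congrFun (congrFun hST a) b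
  have h21 : S.toBlocks₂₁ = Bᵀ := by
    ext i j
    have h := hSapp (Sum.inr i) (Sum.inl j)
    rw [Matrix.transpose_apply] at h
    simpa [hBdef, Matrix.toBlocks₂₁, Matrix.toBlocks₁₂, Matrix.of_apply] using h.symm
  have hEsym : Eᵀ = E := by
    ext i j
    have h := hSapp (Sum.inr i) (Sum.inr j)
    rw [Matrix.transpose_apply] at h
    simpa [hEdef, Matrix.toBlocks₂₂, Matrix.of_apply] using h
  have hSfb : S = fromBlocks A B Bᵀ E := by
    rw [← h21, hAdef, hBdef, hEdef]
    exact (fromBlocks_toBlocks S).symm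
  clear_value A B E
  have hAt : Atilde ω D = fromBlocks 0 Ω (-Ω) (-D) := rfl
  have hAtT : (Atilde ω D)ᵀ = fromBlocks 0 (-Ω) Ω (-D) := by
    rw [hAt, fromBlocks_transpose, transpose_neg, transpose_neg, hΩT, hDsym, transpose_zero]
  have hblocks := hS
  rw [hSfb, hAtT, hAt, hWdef, fromBlocks_multiply, fromBlocks_multiply, fromBlocks_add] at hblocks
  have hWneg : -(Matrix.fromBlocks (p • (1 : Matrix (Fin n) (Fin n) ℝ)) 0 0 1)
      = fromBlocks (-(p • (1:Matrix (Fin n) (Fin n) ℝ))) (0 : Matrix (Fin n) (Fin n) ℝ) (0 : Matrix (Fin n) (Fin n) ℝ) (-(1 : Matrix (Fin n) (Fin n) ℝ)) := by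
    rw [fromBlocks_neg, neg_zero]
  rw [hWneg, fromBlocks_inj] at hblocks
  obtain ⟨e11, e12, e21, e22⟩ := hblocks
  simp only [Matrix.zero_mul, Matrix.mul_zero, zero_add, add_zero, Matrix.neg_mul,
    Matrix.mul_neg] at e11 e12 e21 e22
  -- e11 : Ω * Bᵀ + B * Ω = -(p • 1)
  -- e12 : Ω * E + (-(A * Ω) + -(B * D)) = 0
  -- e21 : -(Ω * A) + -(D * Bᵀ) + (E * Ω) = 0  (shape to confirm)
  -- e22 : -(Ω * B) + -(D * E) + (-(Bᵀ * Ω) + -(E * D)) = -1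
  set K : Matrix (Fin n) (Fin n) ℝ := B * Ω + (p/2) • (1 : Matrix (Fin n) (Fin n) ℝ) with hKdef
  clear_value K
  have hKskew : Kᵀ = -K := by
    have h : Kᵀ + K = 0 := by
      rw [hKdef, transpose_add, transpose_mul, hΩT, transpose_smul, transpose_one]
      have h2 : Ω * Bᵀ + (p/2) • (1:Matrix (Fin n) (Fin n) ℝ)
            + (B * Ω + (p/2) • (1:Matrix (Fin n) (Fin n) ℝ))
          = (Ω * Bᵀ + B * Ω) + ((p/2 + p/2) • (1:Matrix (Fin n) (Fin n) ℝ)) := by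
        rw [add_smul]; abel
      rw [h2, e11]
      have h3 : p/2 + p/2 = p := by ring
      rw [h3, neg_add_cancel]
    exact eq_neg_of_add_eq_zero_left h
  -- rearranged equations
  have e12' : A * Ω = Ω * E - B * D := by
    have h2 : Ω * E - (A * Ω + B * D) = 0 := by
      calc Ω * E - (A * Ω + B * D) = Ω * E + (-(A * Ω) + -(B * D)) := by abel
        _ = 0 := e12
    have h3 := sub_eq_zero.mp h2
    rw [h3]; abel
  have e21' : Ω * A = E * Ω - D * Bᵀ := by
    have h2 : E * Ω - (Ω * A + D * Bᵀ) = 0 := by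
      calc E * Ω - (Ω * A + D * Bᵀ) = -(Ω * A) + -(D * Bᵀ) + E * Ω := by abel
        _ = 0 := e21
    have h3 := sub_eq_zero.mp h2
    rw [h3]; abel
  have e22' : D * E + E * D = 1 - Ω * B - Bᵀ * Ω := by
    have h3 : Ω * B + D * E + Bᵀ * Ω + E * D = 1 := by
      calc Ω * B + D * E + Bᵀ * Ω + E * D
          = -(-(Ω * B) + -(D * E) + (-(Bᵀ * Ω) + -(E * D))) := by abel
        _ = -(-1) := by rw [e22]
        _ = 1 := neg_neg 1
    rw [← h3]; abel
  have hB2 : B = (K - (p/2) • 1) * Oi := by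
    have h2 : K - (p/2) • (1 : Matrix (Fin n) (Fin n) ℝ) = B * Ω := by rw [hKdef]; abel
    rw [h2, Matrix.mul_assoc, hOOi, Matrix.mul_one]
  have hBT2 : Bᵀ = Oi * (-K - (p/2) • 1) := by
    rw [hB2, transpose_mul, hOiT, transpose_sub, hKskew, transpose_smul, transpose_one]
  set N : Matrix (Fin n) (Fin n) ℝ := Oi * D * Oi with hNdef
  clear_value N
  have hNT : Nᵀ = N := by
    rw [hNdef, transpose_mul, transpose_mul, hOiT, hDsym, ← Matrix.mul_assoc]
  -- A from the two off-diagonal equations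
  have hA1 : A = (Ω * E - B * D) * Oi := by
    rw [← e12', Matrix.mul_assoc, hOOi, Matrix.mul_one]
  have hA2 : A = Oi * (E * Ω - D * Bᵀ) := by
    rw [← e21', ← Matrix.mul_assoc, hOiO, Matrix.one_mul]
  have hBDOi : B * D * Oi = K * N - (p/2) • N := by
    rw [hB2]
    have h2 : ((K - (p/2) • (1 : Matrix (Fin n) (Fin n) ℝ)) * Oi) * D * Oi
        = (K - (p/2) • 1) * (Oi * D * Oi) := by simp only [Matrix.mul_assoc]
    rw [h2, ← hNdef, sub_mul, smul_mul_assoc, one_mul]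
  have hOiDBT : Oi * (D * Bᵀ) = -(N * K) - (p/2) • N := by
    rw [hBT2]
    have h2 : Oi * (D * (Oi * (-K - (p/2) • (1 : Matrix (Fin n) (Fin n) ℝ))))
        = (Oi * D * Oi) * (-K - (p/2) • 1) := by simp only [Matrix.mul_assoc]
    rw [h2, ← hNdef, mul_sub, mul_neg, mul_smul_comm, mul_one]
  have f6 : Ω * E * Oi - Oi * E * Ω = K * N + N * K := by
    have h2 : (Ω * E - B * D) * Oi = Oi * (E * Ω - D * Bᵀ) := by rw [← hA1, hA2]
    rw [sub_mul, mul_sub] at h2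
    rw [hBDOi, hOiDBT] at h2
    have h3 : Oi * (E * Ω) = Oi * E * Ω := by rw [Matrix.mul_assoc]
    rw [h3] at h2
    calc Ω * E * Oi - Oi * E * Ω
        = (Ω * E * Oi - (K * N - (p/2) • N)) - Oi * E * Ω + K * N - (p/2) • N := by abel
      _ = (Oi * E * Ω - (-(N * K) - (p/2) • N)) - Oi * E * Ω + K * N - (p/2) • N := by rw [h2]
      _ = K * N + N * K := by abel
  have hΩB : Ω * B = Ω * K * Oi - (p/2) • (1 : Matrix (Fin n) (Fin n) ℝ) := by
    rw [hB2]
    have h2 : Ω * ((K - (p/2) • (1 : Matrix (Fin n) (Fin n) ℝ)) * Oi)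
        = (Ω * (K - (p/2) • 1)) * Oi := by rw [Matrix.mul_assoc]
    rw [h2, mul_sub, mul_smul_comm, mul_one, sub_mul, smul_mul_assoc, hOOi]
  have hBTΩ : Bᵀ * Ω = -(Oi * K * Ω) - (p/2) • (1 : Matrix (Fin n) (Fin n) ℝ) := by
    rw [hBT2, Matrix.mul_assoc, sub_mul, Matrix.neg_mul, smul_mul_assoc, one_mul, mul_sub,
      mul_neg, mul_smul_comm, hOiO, ← Matrix.mul_assoc]
  have f7 : D * E + E * D = (1+p) • (1 : Matrix (Fin n) (Fin n) ℝ) - Ω * K * Oi + Oi * K * Ω := by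
    rw [e22', hΩB, hBTΩ]
    have h4 : ((1:ℝ)+p) • (1 : Matrix (Fin n) (Fin n) ℝ) = 1 + p • 1 := by
      rw [add_smul, one_smul]
    rw [h4]
    have h5 : p • (1 : Matrix (Fin n) (Fin n) ℝ) = (p/2) • 1 + (p/2) • 1 := by
      rw [← add_smul]; norm_num
    rw [h5]; abel
  have hKOi0 : (K * Oi).trace = 0 := MH2aux.trace_skew_symm hKskew hOiT
  have hTr : Oi.trace = ∑ i, (ω i)⁻¹ := by rw [hOidef, trace_diagonal]
  -- f2
  have f2 : (Oi * D * E).trace = (1+p)/2 * (∑ i, (ω i)⁻¹) := by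
    have h2 := congrArg (fun M => (Oi * M).trace) f7
    simp only [Matrix.mul_add, Matrix.mul_sub, trace_add, trace_sub] at h2
    have p1 : (Oi * (D * E)).trace = (Oi * D * E).trace := by rw [Matrix.mul_assoc]
    have p2 : (Oi * (E * D)).trace = (Oi * D * E).trace := by
      have htp : (Oi * (E * D))ᵀ = (D * E) * Oi := by
        rw [transpose_mul, transpose_mul, hOiT, hDsym, hEsym]
      calc (Oi * (E * D)).trace = ((Oi * (E * D))ᵀ).trace := (trace_transpose _).symm
        _ = ((D * E) * Oi).trace := by rw [htp]
        _ = (Oi * (D * E)).trace := trace_mul_comm _ _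
        _ = (Oi * D * E).trace := by rw [Matrix.mul_assoc]
    have p3 : (Oi * ((1+p) • (1 : Matrix (Fin n) (Fin n) ℝ))).trace = (1+p) * Oi.trace := by
      rw [mul_smul_comm, mul_one, trace_smul, smul_eq_mul]
    have p4 : (Oi * (Ω * K * Oi)).trace = (K * Oi).trace := by
      have h3 : Oi * (Ω * K * Oi) = (Oi * Ω) * (K * Oi) := by simp only [Matrix.mul_assoc]
      rw [h3, hOiO, one_mul]
    have p5 : (Oi * (Oi * K * Ω)).trace = (K * Oi).trace := by
      calc (Oi * (Oi * K * Ω)).trace = ((Oi * K * Ω) * Oi).trace := trace_mul_comm _ _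
        _ = ((Oi * K) * (Ω * Oi)).trace := by simp only [Matrix.mul_assoc]
        _ = (Oi * K).trace := by rw [hOOi, Matrix.mul_one]
        _ = (K * Oi).trace := trace_mul_comm _ _
    rw [p1, p2, p3, p4, p5, hKOi0, hTr] at h2
    linarith
  -- f3
  have ht1a : (Ω * E * Oi * K).trace = -((Oi * E * Ω * K).trace) := by
    have htp : (Ω * E * Oi * K)ᵀ = Kᵀ * (Oi * E * Ω) := by
      rw [transpose_mul]
      congr 1
      rw [transpose_mul, transpose_mul, hΩT, hOiT, hEsym, ← Matrix.mul_assoc]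
    calc (Ω * E * Oi * K).trace = ((Ω * E * Oi * K)ᵀ).trace := (trace_transpose _).symm
      _ = (Kᵀ * (Oi * E * Ω)).trace := by rw [htp]
      _ = ((-K) * (Oi * E * Ω)).trace := by rw [hKskew]
      _ = -((Oi * E * Ω) * K).trace := by rw [Matrix.neg_mul, trace_neg, trace_mul_comm]
  have ht1b := congrArg (fun M => (M * K).trace) f6
  simp only [Matrix.sub_mul, Matrix.add_mul, trace_sub, trace_add] at ht1b
  -- ht1b : (Ω*E*Oi*K).trace - (Oi*E*Ω*K).trace = (K*N*K).trace + (N*K*K).trace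
  have hcyc1 : ((K * N) * K).trace = ((N * K) * K).trace := by
    calc ((K * N) * K).trace = (K * (K * N)).trace := trace_mul_comm _ _
      _ = ((K * K) * N).trace := by rw [Matrix.mul_assoc]
      _ = (N * (K * K)).trace := trace_mul_comm _ _
      _ = ((N * K) * K).trace := by rw [Matrix.mul_assoc]
  have ht1 : (Oi * E * Ω * K).trace = -((N * K * K).trace) := by
    rw [ht1a] at ht1b
    rw [hcyc1] at ht1b
    linarith
  have hκval : (Kᵀ * K * N).trace = (Oi * E * Ω * K).trace := by
    rw [hKskew, ht1]
    calc ((-K) * K * N).trace = -((K * K * N).trace) := by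
          rw [Matrix.neg_mul, Matrix.neg_mul, trace_neg]
      _ = -((N * K * K).trace) := by
          congr 1
          calc ((K * K) * N).trace = (N * (K * K)).trace := trace_mul_comm _ _
            _ = ((N * K) * K).trace := by rw [Matrix.mul_assoc]
  have f3 : (E * D * E).trace = (1+p)/2 * E.trace - (Kᵀ * K * N).trace := by
    have h2 := congrArg (fun M => (E * M).trace) f7
    simp only [Matrix.mul_add, Matrix.mul_sub, trace_add, trace_sub] at h2
    have q1 : (E * (D * E)).trace = (E * D * E).trace := by rw [Matrix.mul_assoc]
    have q2 : (E * (E * D)).trace = (E * D * E).trace := trace_mul_comm E (E * D)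
    have q3 : (E * ((1+p) • (1 : Matrix (Fin n) (Fin n) ℝ))).trace = (1+p) * E.trace := by
      rw [mul_smul_comm, mul_one, trace_smul, smul_eq_mul]
    have q4 : (E * (Ω * K * Oi)).trace = (Oi * E * Ω * K).trace := by
      calc (E * (Ω * K * Oi)).trace = ((Ω * K * Oi) * E).trace := trace_mul_comm _ _
        _ = ((Ω * K) * (Oi * E)).trace := by simp only [Matrix.mul_assoc]
        _ = ((Oi * E) * (Ω * K)).trace := trace_mul_comm _ _
        _ = (Oi * E * Ω * K).trace := by simp only [Matrix.mul_assoc]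
    have q5 : (E * (Oi * K * Ω)).trace = (Ω * E * Oi * K).trace := by
      calc (E * (Oi * K * Ω)).trace = ((Oi * K * Ω) * E).trace := trace_mul_comm _ _
        _ = ((Oi * K) * (Ω * E)).trace := by simp only [Matrix.mul_assoc]
        _ = ((Ω * E) * (Oi * K)).trace := trace_mul_comm _ _
        _ = (Ω * E * Oi * K).trace := by simp only [Matrix.mul_assoc]
    rw [q1, q2, q3, q4, q5, ht1a] at h2
    rw [hκval]
    linarith
  -- f1
  have hxX : X.trace = A.trace + E.trace := by
    have htrS : S.trace = X.trace := by
      rw [hSdef, trace_smul, trace_add, trace_transpose, smul_eq_mul]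
      ring
    have htrS2 : S.trace = A.trace + E.trace := by
      rw [hSfb, MH2aux.trace_fromBlocks']
    linarith
  have hAtr : A.trace = E.trace + p/2 * N.trace := by
    rw [hA1, sub_mul, trace_sub]
    have r1 : ((Ω * E) * Oi).trace = E.trace := by
      calc ((Ω * E) * Oi).trace = (Oi * (Ω * E)).trace := trace_mul_comm _ _
        _ = ((Oi * Ω) * E).trace := by rw [Matrix.mul_assoc]
        _ = E.trace := by rw [hOiO, Matrix.one_mul]
    have r2 : ((B * D) * Oi).trace = -(p/2 * N.trace) := by
      rw [hBDOi, trace_sub, trace_smul, smul_eq_mul]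
      have : (K * N).trace = 0 := MH2aux.trace_skew_symm hKskew hNT
      rw [this]
      ring
    rw [r1, r2]
    ring
  have f1 : X.trace = 2 * E.trace + p/2 * N.trace := by
    rw [hxX, hAtr]; ring
  exact ⟨E, K, hEsym, hKskew, f1, f2, f3, f7, f6⟩

end Core


section PSDLemmas

variable {n : ℕ}

open scoped MatrixOrder in
noncomputable def Matrix.PosSemidef.sqrt {D : Matrix (Fin n) (Fin n) ℝ} (_hD : D.PosSemidef) :
    Matrix (Fin n) (Fin n) ℝ := CFC.sqrt D

open scoped MatrixOrder in
lemma Matrix.PosSemidef.posSemidef_sqrt {D : Matrix (Fin n) (Fin n) ℝ} (hD : D.PosSemidef) :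
    hD.sqrt.PosSemidef := (CFC.sqrt_nonneg D).posSemidef

open scoped MatrixOrder in
lemma Matrix.PosSemidef.sqrt_mul_self {D : Matrix (Fin n) (Fin n) ℝ} (hD : D.PosSemidef) :
    hD.sqrt * hD.sqrt = D := CFC.sqrt_mul_sqrt_self D hD.nonneg

lemma sqrt_transpose {D : Matrix (Fin n) (Fin n) ℝ} (hD : D.PosSemidef) :
    (hD.sqrt)ᵀ = hD.sqrt := by
  rw [← Matrix.conjTranspose_eq_transpose_of_trivial]
  exact (hD.posSemidef_sqrt).isHermitian.eq

lemma trace_KtKN_nonneg (ω : Fin n → ℝ) (D : Matrix (Fin n) (Fin n) ℝ) (hD : D.PosSemidef)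
    (K : Matrix (Fin n) (Fin n) ℝ) :
    0 ≤ (Kᵀ * K * ((Matrix.diagonal fun i => (ω i)⁻¹) * D
      * (Matrix.diagonal fun i => (ω i)⁻¹))).trace := by
  set Oi : Matrix (Fin n) (Fin n) ℝ := Matrix.diagonal (fun i => (ω i)⁻¹) with hOidef
  have hOiT : Oiᵀ = Oi := Matrix.diagonal_transpose _
  set Q : Matrix (Fin n) (Fin n) ℝ := hD.sqrt with hQdef
  have hQT : Qᵀ = Q := sqrt_transpose hD
  have hQQ : Q * Q = D := hD.sqrt_mul_self
  set M : Matrix (Fin n) (Fin n) ℝ := K * (Oi * Q) with hMdef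
  have key : (Mᵀ * M).trace = (Kᵀ * K * (Oi * D * Oi)).trace := by
    have h1 : Mᵀ * M = (Q * Oi) * (Kᵀ * (K * (Oi * Q))) := by
      rw [hMdef, transpose_mul, transpose_mul, hQT, hOiT]
      simp only [Matrix.mul_assoc]
    calc (Mᵀ * M).trace = ((Q * Oi) * (Kᵀ * (K * (Oi * Q)))).trace := by rw [h1]
      _ = ((Kᵀ * (K * (Oi * Q))) * (Q * Oi)).trace := trace_mul_comm _ _
      _ = (Kᵀ * K * (Oi * D * Oi)).trace := by
          rw [← hQQ]; simp only [Matrix.mul_assoc]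
  rw [← key]
  exact MH2aux.trace_tmul_self_nonneg M

lemma KOiD_eq_zero (ω : Fin n → ℝ) (D : Matrix (Fin n) (Fin n) ℝ) (hD : D.PosSemidef)
    (K : Matrix (Fin n) (Fin n) ℝ)
    (hκ : (Kᵀ * K * ((Matrix.diagonal fun i => (ω i)⁻¹) * D
      * (Matrix.diagonal fun i => (ω i)⁻¹))).trace = 0) :
    K * (Matrix.diagonal fun i => (ω i)⁻¹) * D = 0 := by
  set Oi : Matrix (Fin n) (Fin n) ℝ := Matrix.diagonal (fun i => (ω i)⁻¹) with hOidef
  have hOiT : Oiᵀ = Oi := Matrix.diagonal_transpose _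
  set Q : Matrix (Fin n) (Fin n) ℝ := hD.sqrt with hQdef
  have hQT : Qᵀ = Q := sqrt_transpose hD
  have hQQ : Q * Q = D := hD.sqrt_mul_self
  set M : Matrix (Fin n) (Fin n) ℝ := K * (Oi * Q) with hMdef
  have key : (Mᵀ * M).trace = (Kᵀ * K * (Oi * D * Oi)).trace := by
    have h1 : Mᵀ * M = (Q * Oi) * (Kᵀ * (K * (Oi * Q))) := by
      rw [hMdef, transpose_mul, transpose_mul, hQT, hOiT]
      simp only [Matrix.mul_assoc]
    calc (Mᵀ * M).trace = ((Q * Oi) * (Kᵀ * (K * (Oi * Q)))).trace := by rw [h1]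
      _ = ((Kᵀ * (K * (Oi * Q))) * (Q * Oi)).trace := trace_mul_comm _ _
      _ = (Kᵀ * K * (Oi * D * Oi)).trace := by
          rw [← hQQ]; simp only [Matrix.mul_assoc]
  have hM0 : M = 0 := MH2aux.eq_zero_of_trace_tmul_self (by rw [key]; exact hκ)
  have h2 : M * Q = 0 := by rw [hM0, Matrix.zero_mul]
  rw [hMdef] at h2
  calc K * Oi * D = K * (Oi * Q) * Q := by rw [← hQQ]; simp only [Matrix.mul_assoc]
    _ = 0 := h2

lemma trace_OiDOi_nonneg (ω : Fin n → ℝ) (D : Matrix (Fin n) (Fin n) ℝ) (hD : D.PosSemidef) :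
    0 ≤ ((Matrix.diagonal fun i => (ω i)⁻¹) * D * (Matrix.diagonal fun i => (ω i)⁻¹)).trace := by
  set Oi : Matrix (Fin n) (Fin n) ℝ := Matrix.diagonal (fun i => (ω i)⁻¹) with hOidef
  have hOiT : Oiᵀ = Oi := Matrix.diagonal_transpose _
  set Q : Matrix (Fin n) (Fin n) ℝ := hD.sqrt with hQdef
  have hQT : Qᵀ = Q := sqrt_transpose hD
  have hQQ : Q * Q = D := hD.sqrt_mul_self
  have key : ((Q * Oi)ᵀ * (Q * Oi)).trace = (Oi * D * Oi).trace := by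
    rw [transpose_mul, hQT, hOiT, ← hQQ]
    simp only [Matrix.mul_assoc]
  rw [← key]
  exact MH2aux.trace_tmul_self_nonneg _

lemma cs_quadratic (ω : Fin n → ℝ) (D E : Matrix (Fin n) (Fin n) ℝ) (hD : D.PosSemidef)
    (hE : Eᵀ = E) (t : ℝ) :
    0 ≤ (E * D * E).trace * (t * t)
      + (-(2 * ((Matrix.diagonal fun i => (ω i)⁻¹) * D * E).trace)) * t
      + ((Matrix.diagonal fun i => (ω i)⁻¹) * D * (Matrix.diagonal fun i => (ω i)⁻¹)).trace := by
  set Oi : Matrix (Fin n) (Fin n) ℝ := Matrix.diagonal (fun i => (ω i)⁻¹) with hOidef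
  have hOiT : Oiᵀ = Oi := Matrix.diagonal_transpose _
  set Q : Matrix (Fin n) (Fin n) ℝ := hD.sqrt with hQdef
  have hQT : Qᵀ = Q := sqrt_transpose hD
  have hQQ : Q * Q = D := hD.sqrt_mul_self
  set P : Matrix (Fin n) (Fin n) ℝ := Q * Oi - t • (Q * E) with hPdef
  have expand : (Pᵀ * P).trace = (Oi * D * Oi).trace - 2 * ((Oi * D * E).trace) * t
      + (E * D * E).trace * (t * t) := by
    have h1 : Pᵀ * P = (Oi * (Q * (Q * Oi))) - t • (Oi * (Q * (Q * E)))
        - t • (E * (Q * (Q * Oi))) + (t * t) • (E * (Q * (Q * E))) := by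
      rw [hPdef, transpose_sub, transpose_smul, transpose_mul, transpose_mul, hQT, hOiT, hE,
        Matrix.sub_mul, Matrix.mul_sub, Matrix.mul_sub, smul_mul_assoc, mul_smul_comm,
        mul_smul_comm, smul_mul_assoc, smul_smul]
      simp only [Matrix.mul_assoc]
      abel
    rw [h1]
    rw [trace_add, trace_sub, trace_sub, trace_smul, trace_smul, trace_smul]
    have e1 : (Oi * (Q * (Q * Oi))).trace = (Oi * D * Oi).trace := by
      rw [← hQQ]; simp only [Matrix.mul_assoc]
    have e2 : (Oi * (Q * (Q * E))).trace = (Oi * D * E).trace := by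
      rw [← hQQ]; simp only [Matrix.mul_assoc]
    have e3 : (E * (Q * (Q * Oi))).trace = (Oi * D * E).trace := by
      have h4 : (E * (Q * (Q * Oi)))ᵀ = Oi * (Q * (Q * E)) := by
        rw [transpose_mul, transpose_mul, transpose_mul, hQT, hOiT, hE]
        simp only [Matrix.mul_assoc]
      calc (E * (Q * (Q * Oi))).trace = ((E * (Q * (Q * Oi)))ᵀ).trace := (trace_transpose _).symm
        _ = (Oi * (Q * (Q * E))).trace := by rw [h4]
        _ = (Oi * D * E).trace := e2
    have e4 : (E * (Q * (Q * E))).trace = (E * D * E).trace := by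
      rw [← hQQ]; simp only [Matrix.mul_assoc]
    rw [e1, e2, e3, e4]
    simp only [smul_eq_mul]
    ring
  have h0 := MH2aux.trace_tmul_self_nonneg P
  rw [expand] at h0
  linarith [h0]

lemma cs_ineq (ω : Fin n → ℝ) (D E : Matrix (Fin n) (Fin n) ℝ) (hD : D.PosSemidef)
    (hE : Eᵀ = E) :
    (((Matrix.diagonal fun i => (ω i)⁻¹) * D * E).trace)^2
      ≤ ((Matrix.diagonal fun i => (ω i)⁻¹) * D * (Matrix.diagonal fun i => (ω i)⁻¹)).trace
        * (E * D * E).trace := by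
  have hd := discrim_le_zero (cs_quadratic ω D E hD hE)
  rw [discrim] at hd
  nlinarith [hd]

lemma cs_eq_case (ω : Fin n → ℝ) (D E : Matrix (Fin n) (Fin n) ℝ) (hD : D.PosSemidef)
    (hE : Eᵀ = E) (μ : ℝ)
    (hμ : (E * D * E).trace - 2 * μ * ((Matrix.diagonal fun i => (ω i)⁻¹) * D * E).trace
      + μ^2 * ((Matrix.diagonal fun i => (ω i)⁻¹) * D
        * (Matrix.diagonal fun i => (ω i)⁻¹)).trace = 0) :
    D * E = μ • (D * (Matrix.diagonal fun i => (ω i)⁻¹)) := by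
  set Oi : Matrix (Fin n) (Fin n) ℝ := Matrix.diagonal (fun i => (ω i)⁻¹) with hOidef
  have hOiT : Oiᵀ = Oi := Matrix.diagonal_transpose _
  set Q : Matrix (Fin n) (Fin n) ℝ := hD.sqrt with hQdef
  have hQT : Qᵀ = Q := sqrt_transpose hD
  have hQQ : Q * Q = D := hD.sqrt_mul_self
  set R : Matrix (Fin n) (Fin n) ℝ := Q * E - μ • (Q * Oi) with hRdef
  have expand : (Rᵀ * R).trace = (E * D * E).trace - 2 * μ * ((Oi * D * E).trace)
      + μ^2 * ((Oi * D * Oi).trace) := by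
    have h1 : Rᵀ * R = (E * (Q * (Q * E))) - μ • (E * (Q * (Q * Oi)))
        - μ • (Oi * (Q * (Q * E))) + (μ * μ) • (Oi * (Q * (Q * Oi))) := by
      rw [hRdef, transpose_sub, transpose_smul, transpose_mul, transpose_mul, hQT, hOiT, hE,
        Matrix.sub_mul, Matrix.mul_sub, Matrix.mul_sub, smul_mul_assoc, mul_smul_comm,
        mul_smul_comm, smul_mul_assoc, smul_smul]
      simp only [Matrix.mul_assoc]
      abel
    rw [h1]
    rw [trace_add, trace_sub, trace_sub, trace_smul, trace_smul, trace_smul]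
    have e1 : (Oi * (Q * (Q * Oi))).trace = (Oi * D * Oi).trace := by
      rw [← hQQ]; simp only [Matrix.mul_assoc]
    have e2 : (Oi * (Q * (Q * E))).trace = (Oi * D * E).trace := by
      rw [← hQQ]; simp only [Matrix.mul_assoc]
    have e3 : (E * (Q * (Q * Oi))).trace = (Oi * D * E).trace := by
      have h4 : (E * (Q * (Q * Oi)))ᵀ = Oi * (Q * (Q * E)) := by
        rw [transpose_mul, transpose_mul, transpose_mul, hQT, hOiT, hE]
        simp only [Matrix.mul_assoc]
      calc (E * (Q * (Q * Oi))).trace = ((E * (Q * (Q * Oi)))ᵀ).trace := (trace_transpose _).symm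
        _ = (Oi * (Q * (Q * E))).trace := by rw [h4]
        _ = (Oi * D * E).trace := e2
    have e4 : (E * (Q * (Q * E))).trace = (E * D * E).trace := by
      rw [← hQQ]; simp only [Matrix.mul_assoc]
    rw [e1, e2, e3, e4]
    simp only [smul_eq_mul]
    ring
  have hR0 : R = 0 := MH2aux.eq_zero_of_trace_tmul_self (by rw [expand]; linarith [hμ])
  have h2 : Q * R = 0 := by rw [hR0, Matrix.mul_zero]
  rw [hRdef, Matrix.mul_sub, mul_smul_comm] at h2
  have h3 : Q * (Q * E) = μ • (Q * (Q * Oi)) := by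
    have := sub_eq_zero.mp h2
    exact this
  calc D * E = Q * (Q * E) := by rw [← hQQ]; simp only [Matrix.mul_assoc]
    _ = μ • (Q * (Q * Oi)) := h3
    _ = μ • (D * Oi) := by rw [← hQQ]; simp only [Matrix.mul_assoc]

end PSDLemmas



section RealLemmas

lemma real_bound (p T x y κ : ℝ) (hp0 : 0 < p) (hT : 0 < T) (hκ : 0 ≤ κ) (hy : 0 ≤ y)
    (hCS : ((1+p)/2*T)^2 ≤ y*((1+p)/2*x - κ)) :
    Real.sqrt (2*p*(1+p)) * T ≤ 2*x + p/2*y ∧ (1+p)/2*T^2 ≤ x*y ∧ 0 < x ∧ 0 < y := by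
  have hp1 : (0:ℝ) < 1 + p := by linarith
  have hL : 0 < ((1+p)/2*T)^2 := by positivity
  have hprod : 0 < y*((1+p)/2*x - κ) := lt_of_lt_of_le hL hCS
  have hy' : 0 < y := by
    rcases lt_or_eq_of_le hy with h | h
    · exact h
    · exfalso; rw [← h] at hprod; simp at hprod
  have hfac : 0 < (1+p)/2*x - κ := by
    by_contra hcon
    push_neg at hcon
    nlinarith
  have hx : 0 < x := by nlinarith
  have hxy : (1+p)/2*T^2 ≤ x*y := by nlinarith
  have hs0 : (0:ℝ) ≤ Real.sqrt (2*p*(1+p)) := Real.sqrt_nonneg _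
  have hs2 : (Real.sqrt (2*p*(1+p)))^2 = 2*p*(1+p) := Real.sq_sqrt (by positivity)
  have hsq : (Real.sqrt (2*p*(1+p)) * T)^2 ≤ (2*x + p/2*y)^2 := by
    rw [mul_pow, hs2]
    nlinarith [sq_nonneg (2*x - p/2*y)]
  have hR : (0:ℝ) ≤ 2*x + p/2*y := by positivity
  have := Real.sqrt_le_sqrt hsq
  rw [Real.sqrt_sq (by positivity), Real.sqrt_sq hR] at this
  exact ⟨this, hxy, hx, hy'⟩

lemma real_eq (p T x y κ : ℝ) (hp0 : 0 < p) (hT : 0 < T) (hκ : 0 ≤ κ) (hy : 0 ≤ y)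
    (hCS : ((1+p)/2*T)^2 ≤ y*((1+p)/2*x - κ))
    (heq : 2*x + p/2*y = Real.sqrt (2*p*(1+p)) * T) :
    κ = 0 ∧ x*y = (1+p)/2*T^2 ∧ 2*x = p/2*y := by
  obtain ⟨hbd, hxy, hx, hy'⟩ := real_bound p T x y κ hp0 hT hκ hy hCS
  have hp1 : (0:ℝ) < 1 + p := by linarith
  have hs2 : (Real.sqrt (2*p*(1+p)))^2 = 2*p*(1+p) := Real.sq_sqrt (by positivity)
  have hsq : (2*x + p/2*y)^2 = 2*p*(1+p)*T^2 := by
    rw [heq, mul_pow, hs2]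
  have hdiff : (2*x - p/2*y)^2 + 4*p*(x*y - (1+p)/2*T^2) = 0 := by linear_combination hsq
  have h5 : 0 ≤ x*y - (1+p)/2*T^2 := by linarith
  have h6 : 0 ≤ 4*p*(x*y - (1+p)/2*T^2) := mul_nonneg (by linarith) h5
  have h1 : (2*x - p/2*y)^2 = 0 := by linarith [sq_nonneg (2*x - p/2*y)]
  have h2 : 2*x = p/2*y := by
    have := pow_eq_zero_iff (n := 2) (by norm_num) |>.mp h1
    linarith
  have h7 : 4*p*(x*y - (1+p)/2*T^2) = 0 := by linarith
  have h8 : x*y - (1+p)/2*T^2 = 0 := by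
    rcases mul_eq_zero.mp h7 with h | h
    · exfalso; linarith
    · exact h
  have h3 : x*y = (1+p)/2*T^2 := by linarith
  have h4 : y*((1+p)/2*x) = ((1+p)/2*T)^2 := by linear_combination ((1+p)/2)*h3
  have h9 : y*((1+p)/2*x - κ) = y*((1+p)/2*x) - y*κ := by ring
  have hκ0 : y*κ ≤ 0 := by linarith
  have hκz : κ = 0 := by
    by_contra hcon
    have : 0 < κ := lt_of_le_of_ne hκ (Ne.symm hcon)
    nlinarith [mul_pos hy' this]
  exact ⟨hκz, h3, h2⟩

end RealLemmas

section Parts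

variable {n : ℕ}

lemma psd_symm {D : Matrix (Fin n) (Fin n) ℝ} (hD : D.PosSemidef) : Dᵀ = D := by
  rw [← Matrix.conjTranspose_eq_transpose_of_trivial]
  exact hD.isHermitian.eq

lemma part1 (hn : 1 ≤ n) (ω : Fin n → ℝ) (hω : ∀ i, 0 < ω i) (p : ℝ)
    (hp0 : 0 < p) (hp1 : p < 1) (D : Matrix (Fin n) (Fin n) ℝ) (hD : D.PosSemidef)
    (hst : (Atilde ω D).IsStable) (X : Matrix (Fin n ⊕ Fin n) (Fin n ⊕ Fin n) ℝ)
    (hXeq : Atilde ω D * X + X * (Atilde ω D)ᵀ =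
      -(Matrix.fromBlocks (p • (1 : Matrix (Fin n) (Fin n) ℝ)) 0 0 1)) :
    Real.sqrt (2 * p * (1 + p)) * (∑ i, (ω i)⁻¹) ≤ X.trace := by
  haveI : Nonempty (Fin n) := ⟨⟨0, by omega⟩⟩
  obtain ⟨E, K, hEsym, hKskew, f1, f2, f3, f7, f6⟩ := core ω hω p D (psd_symm hD) X hXeq
  have hT : 0 < ∑ i, (ω i)⁻¹ :=
    Finset.sum_pos (fun i _ => inv_pos.mpr (hω i)) Finset.univ_nonempty
  have hκ := trace_KtKN_nonneg ω D hD K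
  have hy := trace_OiDOi_nonneg ω D hD
  have hCS := cs_ineq ω D E hD hEsym
  rw [f2, f3] at hCS
  obtain ⟨hbd, _, _, _⟩ := real_bound p (∑ i, (ω i)⁻¹) E.trace
    ((Matrix.diagonal fun i => (ω i)⁻¹) * D * (Matrix.diagonal fun i => (ω i)⁻¹)).trace
    ((Kᵀ * K * ((Matrix.diagonal fun i => (ω i)⁻¹) * D
      * (Matrix.diagonal fun i => (ω i)⁻¹))).trace) hp0 hT hκ hy hCS
  rw [f1]
  linarith [hbd]

lemma part2_trace (hn : 1 ≤ n) (ω : Fin n → ℝ) (hω : ∀ i, 0 < ω i) (p : ℝ)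
    (hp0 : 0 < p) (hp1 : p < 1) (X : Matrix (Fin n ⊕ Fin n) (Fin n ⊕ Fin n) ℝ)
    (hXeq : Atilde ω (Real.sqrt (2 * (1 + p) / p) • Matrix.diagonal ω) * X
      + X * (Atilde ω (Real.sqrt (2 * (1 + p) / p) • Matrix.diagonal ω))ᵀ =
      -(Matrix.fromBlocks (p • (1 : Matrix (Fin n) (Fin n) ℝ)) 0 0 1)) :
    X.trace = Real.sqrt (2 * p * (1 + p)) * (∑ i, (ω i)⁻¹) := by
  haveI : Nonempty (Fin n) := ⟨⟨0, by omega⟩⟩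
  have hωne : ∀ i, ω i ≠ 0 := fun i => ne_of_gt (hω i)
  set c : ℝ := Real.sqrt (2 * (1 + p) / p) with hcdef
  have hc2 : c^2 = 2 * (1 + p) / p := Real.sq_sqrt (by positivity)
  have hc0 : 0 < c := Real.sqrt_pos.mpr (by positivity)
  set D : Matrix (Fin n) (Fin n) ℝ := c • Matrix.diagonal ω with hDdef
  have hDsym : Dᵀ = D := by
    rw [hDdef, transpose_smul, Matrix.diagonal_transpose]
  obtain ⟨E, K, hEsym, hKskew, f1, f2, f3, f7, f6⟩ := core ω hω p D hDsym X hXeq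
  set Oi : Matrix (Fin n) (Fin n) ℝ := Matrix.diagonal (fun i => (ω i)⁻¹) with hOidef
  have hOiO : Oi * Matrix.diagonal ω = 1 := by
    rw [hOidef, diagonal_mul_diagonal]
    have h : (fun i => (ω i)⁻¹ * ω i) = fun _ => (1:ℝ) :=
      funext fun i => inv_mul_cancel₀ (hωne i)
    rw [h, Matrix.diagonal_one]
  have hOiD : Oi * D = c • (1 : Matrix (Fin n) (Fin n) ℝ) := by
    rw [hDdef, mul_smul_comm, hOiO]
  have hT : 0 < ∑ i, (ω i)⁻¹ :=
    Finset.sum_pos (fun i _ => inv_pos.mpr (hω i)) Finset.univ_nonempty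
  have hTr : Oi.trace = ∑ i, (ω i)⁻¹ := by rw [hOidef, trace_diagonal]
  have hy : (Oi * D * Oi).trace = c * (∑ i, (ω i)⁻¹) := by
    rw [hOiD, smul_mul_assoc, Matrix.one_mul, trace_smul, smul_eq_mul, hTr]
  have hxval : (Oi * D * E).trace = c * E.trace := by
    rw [hOiD, smul_mul_assoc, Matrix.one_mul, trace_smul, smul_eq_mul]
  rw [hxval] at f2
  have hx : E.trace = (1+p)/2 * (∑ i, (ω i)⁻¹) / c := by
    rw [eq_div_iff (ne_of_gt hc0)]
    linarith [f2]
  rw [f1, hy, hx]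
  have key : 2 * ((1+p)/2 * (∑ i, (ω i)⁻¹) / c) + p/2 * (c * (∑ i, (ω i)⁻¹))
      = ((1+p)/c + p*c/2) * (∑ i, (ω i)⁻¹) := by
    field_simp
  rw [key]
  have hc2' : c^2 * p = 2*(1+p) := by
    rw [hc2]; field_simp
  have hsq : ((1+p)/c + p*c/2)^2 = 2*p*(1+p) := by
    have hcne : c ≠ 0 := ne_of_gt hc0
    field_simp
    nlinarith [hc2', sq_nonneg c]
  have h3 : 0 ≤ (1+p)/c + p*c/2 := by positivity
  have hval : (1+p)/c + p*c/2 = Real.sqrt (2*p*(1+p)) := by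
    calc (1+p)/c + p*c/2 = Real.sqrt (((1+p)/c + p*c/2)^2) := (Real.sqrt_sq h3).symm
      _ = Real.sqrt (2*p*(1+p)) := by rw [hsq]
  rw [hval]

lemma scalar_muquad (p T x y : ℝ) (hy : 0 < y) (hxy : x*y = (1+p)/2*T^2) :
    (1+p)/2*x - 2*((1+p)*T/(2*y))*((1+p)/2*T) + ((1+p)*T/(2*y))^2*y = 0 := by
  have hyne : y ≠ 0 := ne_of_gt hy
  have key : ((1+p)/2*x - 2*((1+p)*T/(2*y))*((1+p)/2*T) + ((1+p)*T/(2*y))^2*y) * (4*y)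
      = 2*(1+p)*(x*y) - (1+p)^2*T^2 := by
    field_simp
    ring
  have h2 : ((1+p)/2*x - 2*((1+p)*T/(2*y))*((1+p)/2*T) + ((1+p)*T/(2*y))^2*y) * (4*y) = 0 := by
    rw [key, hxy]; ring
  rcases mul_eq_zero.mp h2 with h | h
  · exact h
  · exfalso; exact (by positivity : (0:ℝ) < 4*y).ne' h

set_option maxHeartbeats 2000000 in
lemma part3 (hn : 1 ≤ n) (ω : Fin n → ℝ) (hω : ∀ i, 0 < ω i) (p : ℝ)
    (hp0 : 0 < p) (hp1 : p < 1) (D : Matrix (Fin n) (Fin n) ℝ) (hD : D.PosSemidef)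
    (hst : (Atilde ω D).IsStable) (X : Matrix (Fin n ⊕ Fin n) (Fin n ⊕ Fin n) ℝ)
    (hXeq : Atilde ω D * X + X * (Atilde ω D)ᵀ =
      -(Matrix.fromBlocks (p • (1 : Matrix (Fin n) (Fin n) ℝ)) 0 0 1))
    (htr : X.trace = Real.sqrt (2 * p * (1 + p)) * (∑ i, (ω i)⁻¹)) :
    D = Real.sqrt (2 * (1 + p) / p) • Matrix.diagonal ω := by
  haveI : Nonempty (Fin n) := ⟨⟨0, by omega⟩⟩
  have hωne : ∀ i, ω i ≠ 0 := fun i => ne_of_gt (hω i)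
  obtain ⟨E, K, hEsym, hKskew, f1, f2, f3, f7, f6⟩ := core ω hω p D (psd_symm hD) X hXeq
  set Oi : Matrix (Fin n) (Fin n) ℝ := Matrix.diagonal (fun i => (ω i)⁻¹) with hOidef
  set Ω : Matrix (Fin n) (Fin n) ℝ := Matrix.diagonal ω with hΩdef
  have hOiT : Oiᵀ = Oi := by rw [hOidef]; exact Matrix.diagonal_transpose _
  have hΩT : Ωᵀ = Ω := by rw [hΩdef]; exact Matrix.diagonal_transpose _
  have hOiO : Oi * Ω = 1 := by
    rw [hOidef, hΩdef, diagonal_mul_diagonal]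
    have h : (fun i => (ω i)⁻¹ * ω i) = fun _ => (1:ℝ) :=
      funext fun i => inv_mul_cancel₀ (hωne i)
    rw [h, Matrix.diagonal_one]
  set T : ℝ := ∑ i, (ω i)⁻¹ with hTdef
  set x : ℝ := E.trace with hxdef
  set y : ℝ := (Oi * D * Oi).trace with hydef
  set κ : ℝ := (Kᵀ * K * (Oi * D * Oi)).trace with hκdef
  have hT : 0 < T := Finset.sum_pos (fun i _ => inv_pos.mpr (hω i)) Finset.univ_nonempty
  have hκnn : 0 ≤ κ := trace_KtKN_nonneg ω D hD K
  have hynn : 0 ≤ y := trace_OiDOi_nonneg ω D hD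
  have hCS := cs_ineq ω D E hD hEsym
  rw [f2, f3] at hCS
  have heq : 2*x + p/2*y = Real.sqrt (2*p*(1+p)) * T := by
    rw [← htr, f1]
  obtain ⟨hκz, hxy, h2xy⟩ := real_eq p T x y κ hp0 hT hκnn hynn hCS heq
  obtain ⟨_, _, hx0, hy0'⟩ := real_bound p T x y κ hp0 hT hκnn hynn hCS
  -- kernel relations
  have hKOiD : K * Oi * D = 0 := KOiD_eq_zero ω D hD K hκz
  have hDOiK : D * Oi * K = 0 := by
    have h2 := congrArg Matrix.transpose hKOiD
    rw [Matrix.transpose_zero, transpose_mul, transpose_mul, psd_symm hD, hOiT, hKskew] at h2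
    -- h2 : D * (Oi * -K) = 0
    rw [Matrix.mul_neg, Matrix.mul_neg, neg_eq_zero] at h2
    rw [Matrix.mul_assoc]
    exact h2
  have hKN : K * (Oi * D * Oi) = 0 := by
    calc K * (Oi * D * Oi) = (K * Oi * D) * Oi := by simp only [Matrix.mul_assoc]
      _ = 0 := by rw [hKOiD, Matrix.zero_mul]
  have hNK : (Oi * D * Oi) * K = 0 := by
    calc (Oi * D * Oi) * K = Oi * (D * Oi * K) := by simp only [Matrix.mul_assoc]
      _ = 0 := by rw [hDOiK, Matrix.mul_zero]
  have hEΩ : Ω * E * Oi = Oi * E * Ω := by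
    have h2 := f6
    rw [hKN, hNK, add_zero] at h2
    exact sub_eq_zero.mp h2
  have hcomE : ∀ i j, ω i * E i j = ω j * E i j := by
    intro i j
    have h2 := congrFun (congrFun hEΩ i) j
    rw [Matrix.mul_diagonal, Matrix.mul_diagonal] at h2
    rw [show (Ω * E) i j = ω i * E i j from Matrix.diagonal_mul ω E i j] at h2
    rw [show (Oi * E) i j = (ω i)⁻¹ * E i j from Matrix.diagonal_mul _ E i j] at h2
    have h3 : (ω i + ω j) * (ω i * E i j - ω j * E i j) = 0 := by
      have hi := hωne i
      have hj := hωne j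
      field_simp at h2
      nlinarith [h2]
    rcases mul_eq_zero.mp h3 with h | h
    · exfalso; nlinarith [hω i, hω j]
    · linarith
  set μ : ℝ := (1+p)*T/(2*y) with hμdef
  have hμ0 : 0 < μ := by
    rw [hμdef]
    exact div_pos (by nlinarith) (by linarith)
  have hμquad : (E * D * E).trace - 2*μ*((Oi * D * E).trace) + μ^2 * ((Oi * D * Oi).trace) = 0 := by
    rw [f2, f3, hκz, hμdef]
    have hs := scalar_muquad p T x y hy0' hxy
    linarith [hs]
  have hDE : D * E = μ • (D * Oi) := cs_eq_case ω D E hD hEsym μ hμquad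
  have hED : E * D = μ • (Oi * D) := by
    have h2 := congrArg Matrix.transpose hDE
    rw [transpose_mul, psd_symm hD, hEsym, transpose_smul, transpose_mul, psd_symm hD,
      hOiT] at h2
    exact h2
  set F : Matrix (Fin n) (Fin n) ℝ := E - μ • Oi with hFdef
  have hDF : D * F = 0 := by
    rw [hFdef, Matrix.mul_sub, mul_smul_comm, hDE, sub_self]
  have hFcom : ∀ i j, ω i * F i j = ω j * F i j := by
    intro i j
    by_cases h : i = j
    · subst h; rfl
    · have h2 : F i j = E i j := by
        simp [hFdef, Matrix.sub_apply, Matrix.smul_apply, hOidef, Matrix.diagonal_apply, h]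
      rw [h2]
      exact hcomE i j
  have hFcols : ∀ j, (fun i => F i j) = 0 := by
    intro j
    by_contra hne
    refine no_modal_kernel ω hω D hst j (fun i => F i j) hne (fun i => hFcom i j) ?_
    funext i
    have h2 := congrFun (congrFun hDF i) j
    simp only [Matrix.mul_apply, Matrix.zero_apply] at h2
    simpa [Matrix.mulVec, dotProduct] using h2
  have hEval : E = μ • Oi := by
    have hF0 : F = 0 := by
      ext i j
      exact congrFun (hFcols j) i
    have h2 := hF0
    rw [hFdef, sub_eq_zero] at h2
    exact h2
  have hE3 : μ • (D * Oi) + μ • (Oi * D) = (1+p) • (1 : Matrix (Fin n) (Fin n) ℝ)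
      - Ω * K * Oi + Oi * K * Ω := by
    rw [← hDE, ← hED, f7]
  have hE3e : ∀ i j, μ * (D i j * (ω j)⁻¹) + μ * ((ω i)⁻¹ * D i j)
      = (1+p) * (if i = j then (1:ℝ) else 0) - ω i * K i j * (ω j)⁻¹
        + (ω i)⁻¹ * K i j * ω j := by
    intro i j
    have h2 := congrFun (congrFun hE3 i) j
    simp only [Matrix.add_apply, Matrix.sub_apply, Matrix.smul_apply, smul_eq_mul,
      Matrix.one_apply] at h2
    rw [show (D * Oi) i j = D i j * (ω j)⁻¹ from Matrix.mul_diagonal _ D i j] at h2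
    rw [show (Oi * D) i j = (ω i)⁻¹ * D i j from Matrix.diagonal_mul _ D i j] at h2
    rw [show (Ω * K * Oi) i j = (Ω * K) i j * (ω j)⁻¹ from Matrix.mul_diagonal _ _ i j] at h2
    rw [show (Ω * K) i j = ω i * K i j from Matrix.diagonal_mul ω K i j] at h2
    rw [show (Oi * K * Ω) i j = (Oi * K) i j * ω j from Matrix.mul_diagonal ω _ i j] at h2
    rw [show (Oi * K) i j = (ω i)⁻¹ * K i j from Matrix.diagonal_mul _ K i j] at h2
    exact h2
  have hμne : μ ≠ 0 := ne_of_gt hμ0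
  have hDdiag : ∀ i, D i i = (1+p) * ω i / (2*μ) := by
    intro i
    have h2 := hE3e i i
    simp only [if_pos rfl, ↓reduceIte, mul_one] at h2
    have hi := hωne i
    rw [eq_div_iff (by positivity : (2*μ : ℝ) ≠ 0)]
    field_simp at h2
    nlinarith [h2]
  have hDoff : ∀ i j, i ≠ j → μ * D i j = K i j * (ω j - ω i) := by
    intro i j hij
    have h2 := hE3e i j
    rw [if_neg hij, mul_zero] at h2
    have hi := hωne i
    have hj := hωne j
    have h3 : (ω i + ω j) * (μ * D i j - K i j * (ω j - ω i)) = 0 := by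
      field_simp at h2
      nlinarith [h2]
    rcases mul_eq_zero.mp h3 with h | h
    · exfalso; nlinarith [hω i, hω j]
    · linarith
  have hRj : ∀ j, ∑ k, K j k * (ω k)⁻¹ * D k j = 0 := by
    intro j
    have h2 := congrFun (congrFun hKOiD j) j
    simp only [Matrix.zero_apply] at h2
    have hentry : ∀ k, (K * Oi) j k = K j k * (ω k)⁻¹ := by
      intro k
      rw [hOidef, Matrix.mul_diagonal]
    rw [← h2, Matrix.mul_apply]
    apply Finset.sum_congr rfl
    intro k _
    rw [hentry k]
  have hterm : ∀ j k, μ * (K j k * (ω k)⁻¹ * D k j)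
      = -((K j k)^2 * (ω j - ω k) * (ω k)⁻¹) := by
    intro j k
    by_cases h : k = j
    · subst h
      rw [MH2aux.skew_diag hKskew k]
      ring
    · have h2 := hDoff k j h
      have h3 : K k j = -(K j k) := by
        have h4 := congrFun (congrFun hKskew k) j
        simp only [Matrix.transpose_apply, Matrix.neg_apply] at h4
        linarith
      calc μ * (K j k * (ω k)⁻¹ * D k j) = K j k * (ω k)⁻¹ * (μ * D k j) := by ring
        _ = K j k * (ω k)⁻¹ * (K k j * (ω j - ω k)) := by rw [h2]
        _ = K j k * (ω k)⁻¹ * ((-(K j k)) * (ω j - ω k)) := by rw [h3]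
        _ = -((K j k)^2 * (ω j - ω k) * (ω k)⁻¹) := by ring
  have hsumj : ∀ j, ∑ k, (K j k)^2 * (ω j - ω k) * (ω k)⁻¹ = 0 := by
    intro j
    have h2 : μ * (∑ k, K j k * (ω k)⁻¹ * D k j) = 0 := by rw [hRj j, mul_zero]
    rw [Finset.mul_sum] at h2
    have h3 : ∑ k, μ * (K j k * (ω k)⁻¹ * D k j)
        = ∑ k, -((K j k)^2 * (ω j - ω k) * (ω k)⁻¹) := by
      apply Finset.sum_congr rfl
      intro k _
      exact hterm j k
    rw [h3, Finset.sum_neg_distrib, neg_eq_zero] at h2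
    exact h2
  have hKω : ∀ j k, K j k * (ω j - ω k) = 0 := by
    have hKsq : ∀ j k, K k j = -(K j k) := by
      intro j k
      have h4 := congrFun (congrFun hKskew k) j
      simp only [Matrix.transpose_apply, Matrix.neg_apply] at h4
      linarith
    have hgform : ∀ j k, (K j k)^2 * (ω j - ω k) * (ω k)⁻¹
        + (K k j)^2 * (ω k - ω j) * (ω j)⁻¹
        = (K j k * (ω j - ω k))^2 * ((ω j)⁻¹ * (ω k)⁻¹) := by
      intro j k
      rw [hKsq j k]
      have hi := hωne j
      have hj := hωne k
      field_simp
      ring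
    have htot : ∑ j, ∑ k, (K j k)^2 * (ω j - ω k) * (ω k)⁻¹ = 0 := by
      simp [hsumj]
    have hswap : ∑ j, ∑ k, (K k j)^2 * (ω k - ω j) * (ω j)⁻¹ = 0 := by
      rw [Finset.sum_comm]
      exact htot
    have hpair : ∑ j, ∑ k, ((K j k)^2 * (ω j - ω k) * (ω k)⁻¹
        + (K k j)^2 * (ω k - ω j) * (ω j)⁻¹) = 0 := by
      have hsplit : ∀ j, ∑ k, ((K j k)^2 * (ω j - ω k) * (ω k)⁻¹
          + (K k j)^2 * (ω k - ω j) * (ω j)⁻¹)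
          = (∑ k, (K j k)^2 * (ω j - ω k) * (ω k)⁻¹)
            + (∑ k, (K k j)^2 * (ω k - ω j) * (ω j)⁻¹) := fun j => Finset.sum_add_distrib
    
      calc ∑ j, ∑ k, ((K j k)^2 * (ω j - ω k) * (ω k)⁻¹
            + (K k j)^2 * (ω k - ω j) * (ω j)⁻¹)
          = (∑ j, ∑ k, (K j k)^2 * (ω j - ω k) * (ω k)⁻¹)
            + (∑ j, ∑ k, (K k j)^2 * (ω k - ω j) * (ω j)⁻¹) := by
            rw [← Finset.sum_add_distrib]
            exact Finset.sum_congr rfl (fun j _ => hsplit j)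
        _ = 0 := by rw [htot, hswap, add_zero]
    have hnn : ∀ j ∈ (Finset.univ : Finset (Fin n)),
        0 ≤ ∑ k, ((K j k)^2 * (ω j - ω k) * (ω k)⁻¹
          + (K k j)^2 * (ω k - ω j) * (ω j)⁻¹) := by
      intro j _
      apply Finset.sum_nonneg
      intro k _
      rw [hgform j k]
      have hjj := hω j
      have hkk := hω k
      positivity
    intro j k
    have hjz := (Finset.sum_eq_zero_iff_of_nonneg hnn).mp hpair j (Finset.mem_univ j)
    have hnn2 : ∀ k ∈ (Finset.univ : Finset (Fin n)),
        0 ≤ (K j k)^2 * (ω j - ω k) * (ω k)⁻¹ + (K k j)^2 * (ω k - ω j) * (ω j)⁻¹ := by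
      intro k _
      rw [hgform j k]
      have hjj := hω j
      have hkk := hω k
      positivity
    have hkz := (Finset.sum_eq_zero_iff_of_nonneg hnn2).mp hjz k (Finset.mem_univ k)
    rw [hgform j k] at hkz
    have hfac : ((ω j)⁻¹ * (ω k)⁻¹ : ℝ) ≠ 0 := by
      have hi := hωne j
      have hj := hωne k
      positivity
    rcases mul_eq_zero.mp hkz with h | h
    · exact pow_eq_zero_iff (n := 2) (by norm_num) |>.mp h
    · exact absurd h hfac
  set c0 : ℝ := (1+p)/(2*μ) with hc0def
  have hc00 : 0 < c0 := by
    rw [hc0def]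
    positivity
  have hDform : D = c0 • Matrix.diagonal ω := by
    ext i j
    by_cases h : i = j
    · subst h
      rw [hDdiag i]
      simp only [Matrix.smul_apply, Matrix.diagonal_apply, if_pos rfl, ↓reduceIte, smul_eq_mul, hc0def]
      field_simp
    · have h2 := hDoff i j h
      have h3 : K i j * (ω j - ω i) = 0 := by
        have := hKω i j
        nlinarith [this]
      rw [h3] at h2
      have h4 : D i j = 0 := by
        rcases mul_eq_zero.mp h2.symm.symm with hh | hh
        · exact absurd hh hμne
        · exact hh
      rw [h4]
      simp [Matrix.smul_apply, Matrix.diagonal_apply, h]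
  -- determine μ
  have hxμ : x = μ * T := by
    rw [hxdef, hEval, trace_smul, smul_eq_mul, hOidef, trace_diagonal, hTdef]
  have hyμ : y = c0 * T := by
    rw [hydef, hDform]
    have h2 : Oi * (c0 • Matrix.diagonal ω) * Oi = c0 • Oi := by
      rw [mul_smul_comm, show (Oi * Matrix.diagonal ω : Matrix (Fin n) (Fin n) ℝ) = 1 from by
        rw [← hΩdef]; exact hOiO]
      rw [smul_mul_assoc, Matrix.one_mul]
    rw [h2, trace_smul, smul_eq_mul, hOidef, trace_diagonal, hTdef]
  have hμeq : 8 * μ^2 = p * (1+p) := by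
    have h2 : 2*(μ*T) = p/2*(c0*T) := by rw [← hxμ, ← hyμ]; exact h2xy
    have hTne : T ≠ 0 := ne_of_gt hT
    have h3 : 2*μ = p/2*c0 := by
      have h4 : (2*μ - p/2*c0) * T = 0 := by linear_combination h2
      rcases mul_eq_zero.mp h4 with h | h
      · linarith
      · exact absurd h hTne
    rw [hc0def] at h3
    field_simp at h3
    nlinarith [h3]
  have hc0sq : c0^2 = 2*(1+p)/p := by
    rw [hc0def]
    field_simp
    nlinarith [hμeq]
  have hfin : Real.sqrt (2*(1+p)/p) = c0 := by
    rw [← hc0sq, Real.sqrt_sq (le_of_lt hc00)]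
  rw [hDform, hfin]

end Parts


theorem mixed_H2_global_minimum (n : ℕ) (hn : 1 ≤ n) (ω : Fin n → ℝ)
    (hω : ∀ i, 0 < ω i) (p : ℝ) (hp0 : 0 < p) (hp1 : p < 1) :
    -- the right-hand side  −diag(p·Iₙ, Iₙ)
    let W : Matrix (Fin n ⊕ Fin n) (Fin n ⊕ Fin n) ℝ :=
      Matrix.fromBlocks (p • (1 : Matrix (Fin n) (Fin n) ℝ)) 0 0 1
    let Dstar : Matrix (Fin n) (Fin n) ℝ :=
      Real.sqrt (2 * (1 + p) / p) • Matrix.diagonal ω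
    -- lower bound for every feasible D̃
    (∀ D : Matrix (Fin n) (Fin n) ℝ, D.PosSemidef → (Atilde ω D).IsStable →
      ∀ X : Matrix (Fin n ⊕ Fin n) (Fin n ⊕ Fin n) ℝ,
        Atilde ω D * X + X * (Atilde ω D)ᵀ = -W →
        Real.sqrt (2 * p * (1 + p)) * (∑ i, (ω i)⁻¹) ≤ X.trace) ∧
    -- the minimizer is feasible and attains the bound
    (Dstar.PosSemidef ∧ (Atilde ω Dstar).IsStable ∧
      ∀ X : Matrix (Fin n ⊕ Fin n) (Fin n ⊕ Fin n) ℝ,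
        Atilde ω Dstar * X + X * (Atilde ω Dstar)ᵀ = -W →
        X.trace = Real.sqrt (2 * p * (1 + p)) * (∑ i, (ω i)⁻¹)) ∧
    -- uniqueness of the minimizer
    (∀ D : Matrix (Fin n) (Fin n) ℝ, D.PosSemidef → (Atilde ω D).IsStable →
      ∀ X : Matrix (Fin n ⊕ Fin n) (Fin n ⊕ Fin n) ℝ,
        Atilde ω D * X + X * (Atilde ω D)ᵀ = -W →
        X.trace = Real.sqrt (2 * p * (1 + p)) * (∑ i, (ω i)⁻¹) →
        D = Dstar) := by

  intro W Dstar
  have hc0 : 0 < Real.sqrt (2 * (1 + p) / p) := Real.sqrt_pos.mpr (by positivity)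
  refine ⟨?_, ⟨?_, ?_, ?_⟩, ?_⟩
  · intro D hD hst X hXeq
    exact part1 hn ω hω p hp0 hp1 D hD hst X hXeq
  · show (Real.sqrt (2 * (1 + p) / p) • Matrix.diagonal ω).PosSemidef
    rw [← Matrix.diagonal_smul]
    refine Matrix.posSemidef_diagonal_iff.mpr (fun i => ?_)
    simp only [Pi.smul_apply, smul_eq_mul]
    exact mul_nonneg hc0.le (hω i).le
  · exact stable_modal ω hω _ hc0
  · intro X hXeq
    exact part2_trace hn ω hω p hp0 hp1 X hXeq
  · intro D hD hst X hXeq htr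
    exact part3 hn ω hω p hp0 hp1 D hD hst X hXeq htr
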